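/- Let 𝕂 be ℝ or ℂ, let g : [0,∞) → L(𝕂^d) be a semigroup such that g(x) is invertible for every x ≥ 0, and for each x ≥ 0 let g(x) = D(x)T(x) be the multiplicative Jordan–Chevalley decomposition of g(x), i.e. D(x) is diagonalizable over the algebraic closure of 𝕂 (semisimple), T(x) − id is nilpotent (T(x) is unipotent), and D(x)T(x) = T(x)D(x). Then (D(x))_{x≥0} and (T(x))_{x≥0} are themselves semigroups (D(0) = T(0) = id, D(x+y) = D(x)D(y) and T(x+y) = T(x)T(y) for all x,y ≥ 0), and the two families commute with each other: T(x)D(y) = D(y)T(x) for all x,y ≥ 0. -/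

import Mathlib

section JCaux

variable {K V : Type*} [Field K] [PerfectField K] [AddCommGroup V] [Module K V]
  [FiniteDimensional K V]

/-- Anything commuting with `A` commutes with both parts of a multiplicative
Jordan–Chevalley decomposition `A = D * T`. -/
lemma JC_commute {A D T B : Module.End K V} (hA : IsUnit A)
    (hDT : A = D * T) (hDss : D.IsSemisimple) (hTnil : IsNilpotent (T - 1))
    (hc : D * T = T * D) (hB : Commute B A) : Commute B D ∧ Commute B T := by
  have cDT : Commute D T := hc
  have cDA : Commute D A := by rw [hDT]; exact (Commute.refl D).mul_right cDT
  have cTA : Commute T A := by rw [hDT]; exact cDT.symm.mul_right (Commute.refl T)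
  obtain ⟨N, hN, S, hS, hNnil, hSss, hadd⟩ :=
    Module.End.exists_isNilpotent_isSemisimple (f := A)
  set N₁ : Module.End K V := D * (T - 1) with hN₁def
  have cDT1 : Commute D (T - 1) := cDT.sub_right (Commute.one_right D)
  have hN₁nil : IsNilpotent N₁ := cDT1.isNilpotent_mul_left hTnil
  have cN₁A : Commute N₁ A := Commute.mul_left cDA (cTA.sub_left (Commute.one_left A))
  have hadd₁ : D + N₁ = A := by rw [hDT, hN₁def, mul_sub, mul_one]; abel
  have cDS : Commute D S := Algebra.commute_of_mem_adjoin_singleton_of_commute hS cDA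
  have cN₁N : Commute N₁ N := Algebra.commute_of_mem_adjoin_singleton_of_commute hN cN₁A
  have hDS : D = S := by
    have hdiff : D - S = N - N₁ := by
      rw [sub_eq_sub_iff_add_eq_add, hadd₁, hadd]
    have hss : (D - S).IsSemisimple := Module.End.IsSemisimple.sub_of_commute cDS hDss hSss
    have hnil : IsNilpotent (D - S) := by
      rw [hdiff]; exact cN₁N.symm.isNilpotent_sub hNnil hN₁nil
    have h0 := Module.End.eq_zero_of_isNilpotent_isSemisimple hnil hss
    rwa [sub_eq_zero] at h0
  have cBD : Commute B D := by
    rw [hDS]; exact Algebra.commute_of_mem_adjoin_singleton_of_commute hS hB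
  refine ⟨cBD, ?_⟩
  have hTu : IsUnit T := by
    have h := hTnil.isUnit_one_add
    rwa [show (1 : Module.End K V) + (T - 1) = T by abel] at h
  have hDu : IsUnit D := by
    obtain ⟨v, hv⟩ := hTu
    have hD' : D = A * ↑v⁻¹ := by rw [hDT, ← hv, mul_assoc, Units.mul_inv, mul_one]
    rw [hD']; exact hA.mul v⁻¹.isUnit
  obtain ⟨w, hw⟩ := hDu
  have hTeq : T = ↑w⁻¹ * A := by rw [hDT, ← hw, ← mul_assoc, Units.inv_mul, one_mul]
  have cBw : Commute B (w : Module.End K V) := by rwa [hw]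
  rw [hTeq]
  exact Commute.mul_right cBw.units_inv_right hB

/-- Uniqueness of the multiplicative Jordan–Chevalley decomposition of a unit. -/
lemma JC_unique {A D₁ T₁ D₂ T₂ : Module.End K V} (hA : IsUnit A)
    (h1 : A = D₁ * T₁) (hD₁ : D₁.IsSemisimple) (hT₁ : IsNilpotent (T₁ - 1))
    (hc₁ : D₁ * T₁ = T₁ * D₁)
    (h2 : A = D₂ * T₂) (hD₂ : D₂.IsSemisimple) (hT₂ : IsNilpotent (T₂ - 1))
    (hc₂ : D₂ * T₂ = T₂ * D₂) : D₁ = D₂ ∧ T₁ = T₂ := by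
  have cD₁T₁ : Commute D₁ T₁ := hc₁
  have cD₁A : Commute D₁ A := by rw [h1]; exact (Commute.refl D₁).mul_right cD₁T₁
  have cT₁A : Commute T₁ A := by rw [h1]; exact cD₁T₁.symm.mul_right (Commute.refl T₁)
  obtain ⟨cDD, cDT⟩ := JC_commute hA h2 hD₂ hT₂ hc₂ cD₁A
  obtain ⟨cTD, cTT⟩ := JC_commute hA h2 hD₂ hT₂ hc₂ cT₁A
  have hDeq : D₁ = D₂ := by
    set N₁ : Module.End K V := D₁ * (T₁ - 1) with hN₁def
    set N₂ : Module.End K V := D₂ * (T₂ - 1) with hN₂def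
    have hN₁nil : IsNilpotent N₁ :=
      (cD₁T₁.sub_right (Commute.one_right D₁)).isNilpotent_mul_left hT₁
    have hN₂nil : IsNilpotent N₂ :=
      ((show Commute D₂ T₂ from hc₂).sub_right (Commute.one_right D₂)).isNilpotent_mul_left hT₂
    have cD₂N₁ : Commute D₂ N₁ :=
      Commute.mul_right cDD.symm (cTD.symm.sub_right (Commute.one_right D₂))
    have cT₂'N₁ : Commute (T₂ - 1) N₁ :=
      Commute.sub_left
        (Commute.mul_right cDT.symm (cTT.symm.sub_right (Commute.one_right T₂)))
        (Commute.one_left N₁)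
    have cN₂N₁ : Commute N₂ N₁ := Commute.mul_left cD₂N₁ cT₂'N₁
    have e1 : D₁ + N₁ = A := by rw [h1, hN₁def, mul_sub, mul_one]; abel
    have e2 : N₂ + D₂ = A := by rw [h2, hN₂def, mul_sub, mul_one]; abel
    have hdiff : D₁ - D₂ = N₂ - N₁ := by
      rw [sub_eq_sub_iff_add_eq_add, e1, e2]
    have hss : (D₁ - D₂).IsSemisimple := Module.End.IsSemisimple.sub_of_commute cDD hD₁ hD₂
    have hnil : IsNilpotent (D₁ - D₂) := by
      rw [hdiff]; exact cN₂N₁.isNilpotent_sub hN₂nil hN₁nil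
    have h0 := Module.End.eq_zero_of_isNilpotent_isSemisimple hnil hss
    rwa [sub_eq_zero] at h0
  refine ⟨hDeq, ?_⟩
  have hTu : IsUnit T₁ := by
    have h := hT₁.isUnit_one_add
    rwa [show (1 : Module.End K V) + (T₁ - 1) = T₁ by abel] at h
  have hDu : IsUnit D₁ := by
    obtain ⟨v, hv⟩ := hTu
    have hD' : D₁ = A * ↑v⁻¹ := by rw [h1, ← hv, mul_assoc, Units.mul_inv, mul_one]
    rw [hD']; exact hA.mul v⁻¹.isUnit
  apply hDu.mul_left_cancel
  rw [← h1, hDeq, ← h2]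

end JCaux

/-- For a semigroup of invertible linear maps on `𝕂^d` (`𝕂 = ℝ` or `ℂ`),
the semisimple parts `D x` and unipotent parts `T x` of the multiplicative
Jordan–Chevalley decompositions `g x = D x * T x` form semigroups themselves, and the two
families commute with each other. -/
theorem jordan_chevalley_semigroup
    (𝕂 : Type*) [RCLike 𝕂] (d : ℕ)
    (g : ℝ → Module.End 𝕂 (Fin d → 𝕂))
    (hg0 : g 0 = 1)
    (hgadd : ∀ x y : ℝ, 0 ≤ x → 0 ≤ y → g (x + y) = g x * g y)
    (hginv : ∀ x : ℝ, 0 ≤ x → IsUnit (g x))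
    (D T : ℝ → Module.End 𝕂 (Fin d → 𝕂))
    (hDT : ∀ x : ℝ, 0 ≤ x → g x = D x * T x)
    (hD : ∀ x : ℝ, 0 ≤ x → (D x).IsSemisimple)
    (hT : ∀ x : ℝ, 0 ≤ x → IsNilpotent (T x - 1))
    (hcomm : ∀ x : ℝ, 0 ≤ x → D x * T x = T x * D x) :
    D 0 = 1 ∧ T 0 = 1 ∧
    (∀ x y : ℝ, 0 ≤ x → 0 ≤ y → D (x + y) = D x * D y) ∧
    (∀ x y : ℝ, 0 ≤ x → 0 ≤ y → T (x + y) = T x * T y) ∧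
    (∀ x y : ℝ, 0 ≤ x → 0 ≤ y → T x * D y = D y * T x) := by
  have key : ∀ x : ℝ, 0 ≤ x → ∀ B : Module.End 𝕂 (Fin d → 𝕂), Commute B (g x) →
      Commute B (D x) ∧ Commute B (T x) := fun x hx B hB =>
    JC_commute (hginv x hx) (hDT x hx) (hD x hx) (hT x hx) (hcomm x hx) hB
  have cross : ∀ x y : ℝ, 0 ≤ x → 0 ≤ y →
      Commute (D x) (D y) ∧ Commute (D x) (T y) ∧ Commute (T x) (D y) ∧
        Commute (T x) (T y) := by
    intro x y hx hy
    have cg : Commute (g x) (g y) := by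
      show g x * g y = g y * g x
      rw [← hgadd x y hx hy, ← hgadd y x hy hx, add_comm]
    obtain ⟨h1, h2⟩ := key x hx (g y) cg.symm
    obtain ⟨h3, h4⟩ := key y hy (D x) h1.symm
    obtain ⟨h5, h6⟩ := key y hy (T x) h2.symm
    exact ⟨h3, h4, h5, h6⟩
  have hone : (1 : Module.End 𝕂 (Fin d → 𝕂)).IsSemisimple := by
    exact Module.End.isSemisimple_id
  obtain ⟨hD0, hT0⟩ := JC_unique (A := (1 : Module.End 𝕂 (Fin d → 𝕂))) isUnit_one
    (by rw [← hg0]; exact hDT 0 le_rfl) (hD 0 le_rfl) (hT 0 le_rfl) (hcomm 0 le_rfl)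
    (one_mul 1).symm hone (by rw [sub_self]; exact IsNilpotent.zero) rfl
  refine ⟨hD0, hT0, ?_, ?_, fun x y hx hy => ((cross x y hx hy).2.2.1).eq⟩
  all_goals
    intro x y hx hy
    have hxy : (0 : ℝ) ≤ x + y := add_nonneg hx hy
    obtain ⟨cDD, cDT, cTD, cTT⟩ := cross x y hx hy
    have h2 : g (x + y) = (D x * D y) * (T x * T y) := by
      rw [hgadd x y hx hy, hDT x hx, hDT y hy]
      exact cTD.mul_mul_mul_comm (D x) (T y)
    have hD2 : (D x * D y).IsSemisimple :=
      Module.End.IsSemisimple.mul_of_commute cDD (hD x hx) (hD y hy)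
    have hT2 : IsNilpotent (T x * T y - 1) := by
      rw [show T x * T y - 1 = (T x - 1) * T y + (T y - 1) by rw [sub_mul, one_mul]; abel]
      have n1 : IsNilpotent ((T x - 1) * T y) :=
        (Commute.sub_left cTT (Commute.one_left (T y))).isNilpotent_mul_right (hT x hx)
      have c12 : Commute ((T x - 1) * T y) (T y - 1) :=
        Commute.mul_left
          (Commute.sub_left (cTT.sub_right (Commute.one_right (T x)))
            (Commute.one_left _))
          ((Commute.refl (T y)).sub_right (Commute.one_right (T y)))
      exact c12.isNilpotent_add n1 (hT y hy)
    have hc2 : (D x * D y) * (T x * T y) = (T x * T y) * (D x * D y) :=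
      Commute.mul_left
        (Commute.mul_right (show Commute (D x) (T x) from hcomm x hx) cDT)
        (Commute.mul_right cTD.symm (show Commute (D y) (T y) from hcomm y hy))
    obtain ⟨hDadd, hTadd⟩ := JC_unique (hginv _ hxy) (hDT _ hxy) (hD _ hxy) (hT _ hxy)
      (hcomm _ hxy) h2 hD2 hT2 hc2
    first | exact hDadd | exact hTadd
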